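/- arXiv:2006.04353 — 2 statements merged into one kernel-verified Lean document; each statement's English description precedes it below -/
import Mathlib

section
/- Let (X_t)_{t∈ℕ} be as in the drift setting with deterministic initial value X_0 = x₀, and for a ∈ ℝ define the hitting time T_a = inf{t ≥ 0 : X_t ≤ a}. Then for every a ≥ B, the expected hitting time satisfies E[T_a] ≤ e^{η(x₀ − a)}/(1 − ρ); in particular E[T_a] < ∞. -/
open MeasureTheory Real ENNReal

set_option maxHeartbeats 1000000 in
lemma drift_real_exp_tsum (x : ℝ) : Real.exp x = ∑' n : ℕ, x ^ n / n.factorial := by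
  rw [Real.exp_eq_exp_ℝ, NormedSpace.exp_eq_tsum_div]

set_option maxHeartbeats 1000000 in
lemma drift_exp_sub_linear (x : ℝ) :
    Real.exp x - 1 - x = ∑' n : ℕ, x ^ (n + 2) / (n + 2).factorial := by
  have hs : Summable (fun n : ℕ => x ^ n / n.factorial) :=
    Real.summable_pow_div_factorial x
  have := Summable.sum_add_tsum_nat_add 2 hs
  rw [drift_real_exp_tsum x, ← this]
  simp [Finset.sum_range_succ]
  ring

set_option maxHeartbeats 1000000 in
lemma drift_exp_quad_bound {ν η d : ℝ} (hη0 : 0 ≤ η) (hη1 : η ≤ 1)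
    (hd : |d| ≤ ν) :
    Real.exp (η * d) ≤ 1 + η * d + η ^ 2 * (Real.exp ν - ν - 1) := by
  have key : Real.exp (η * d) - 1 - η * d ≤ η ^ 2 * (Real.exp ν - ν - 1) := by
    have hν2 : Real.exp ν - ν - 1 = ∑' n : ℕ, ν ^ (n + 2) / (n + 2).factorial := by
      rw [← drift_exp_sub_linear ν]; ring
    rw [drift_exp_sub_linear (η * d), hν2]
    have hsum1 : Summable (fun n : ℕ => (η * d) ^ (n + 2) / (n + 2).factorial) :=
      (summable_nat_add_iff 2).2 (Real.summable_pow_div_factorial (η * d))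
    have hsum2 : Summable (fun n : ℕ => ν ^ (n + 2) / (n + 2).factorial) :=
      (summable_nat_add_iff 2).2 (Real.summable_pow_div_factorial ν)
    rw [← tsum_mul_left]
    refine Summable.tsum_le_tsum (fun n => ?_) hsum1 (hsum2.mul_left _)
    have hfac : (0:ℝ) < (n + 2).factorial := by positivity
    rw [div_le_iff₀ hfac, mul_assoc, div_mul_cancel₀ _ (ne_of_gt hfac)]
    calc (η * d) ^ (n + 2) ≤ |(η * d) ^ (n + 2)| := le_abs_self _
      _ = (η * |d|) ^ (n + 2) := by
          rw [abs_pow, abs_mul, abs_of_nonneg hη0]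
      _ ≤ η ^ 2 * ν ^ (n + 2) := by
          rw [mul_pow]
          have h1 : η ^ (n + 2) ≤ η ^ 2 :=
            pow_le_pow_of_le_one hη0 hη1 (by omega)
          have h2 : |d| ^ (n + 2) ≤ ν ^ (n + 2) :=
            pow_le_pow_left₀ (abs_nonneg d) hd _
          nlinarith [pow_nonneg (abs_nonneg d) (n+2), pow_nonneg hη0 2,
            pow_nonneg hη0 (n+2)]
  linarith

lemma drift_integrable_of_ae_abs_le {Ω : Type*} [MeasurableSpace Ω] {μ : Measure Ω}
    [IsFiniteMeasure μ] {f : Ω → ℝ} (hf : AEStronglyMeasurable f μ) {C : ℝ}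
    (h : ∀ᵐ ω ∂μ, |f ω| ≤ C) : Integrable f μ :=
  (integrable_const C).mono' hf
    (by filter_upwards [h] with ω hω; simpa [Real.norm_eq_abs] using hω)

/-- Expected hitting-time bound: for a process with bounded increments, negative
drift above level `B`, and deterministic initial value `x₀`, the hitting time
`T_a = inf {t : X t ≤ a}` (valued in `ℝ≥0∞`, with `inf ∅ = ∞`) satisfies
`E[T_a] ≤ e^{η(x₀ − a)}/(1 − ρ) < ∞` for every `a ≥ B`. -/
theorem stmt_3
    {Ω : Type*} {m : MeasurableSpace Ω} {μ : Measure Ω} [IsProbabilityMeasure μ]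
    (ℱ : Filtration ℕ m)
    (X : ℕ → Ω → ℝ) (hXadapted : Adapted ℱ X)
    (x₀ ν α B η ρ : ℝ)
    (hX0 : ∀ ω, X 0 ω = x₀)
    (hν : 0 < ν)
    (hinc : ∀ t : ℕ, ∀ᵐ ω ∂μ, |X (t + 1) ω - X t ω| ≤ ν)
    (hα : 0 < α) (hB : 0 < B)
    (hdrift : ∀ t : ℕ, ∀ᵐ ω ∂μ,
      X t ω > B → (μ[fun ω' => X (t + 1) ω' - X t ω' | ℱ t]) ω ≤ -α)
    (hη0 : 0 < η) (hη1 : η ≤ min 1 (α / (2 * (Real.exp ν - ν - 1))))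
    (hρ : ρ = 1 - η * α / 2) (hρ0 : 0 < ρ) (hρ1 : ρ < 1)
    (a : ℝ) (ha : a ≥ B)
    (T : Ω → ℝ≥0∞)
    (hT : ∀ ω, T ω = ⨅ (t : ℕ) (_ : X t ω ≤ a), (t : ℝ≥0∞)) :
    ∫⁻ ω, T ω ∂μ ≤ ENNReal.ofReal (Real.exp (η * (x₀ - a)) / (1 - ρ)) ∧
      ∫⁻ ω, T ω ∂μ < ⊤ := by
  classical
  set c : ℝ := Real.exp ν - ν - 1 with hc_def
  have hc : 0 < c := by
    have := Real.add_one_lt_exp (ne_of_gt hν)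
    rw [hc_def]; linarith
  have hηle1 : η ≤ 1 := le_trans hη1 (min_le_left _ _)
  have hηle2 : η ≤ α / (2 * c) := le_trans hη1 (min_le_right _ _)
  have hηc : η * c ≤ α / 2 := by
    rw [le_div_iff₀ (by positivity)] at hηle2
    nlinarith
  set K : ℝ := Real.exp (η * (x₀ - a)) with hK_def
  have hK0 : 0 < K := Real.exp_pos _
  set Y : ℕ → Ω → ℝ := fun t ω => Real.exp (η * (X t ω - a)) with hY_def
  set A : ℕ → Set Ω := fun t => {ω | ∀ s ≤ t, a < X s ω} with hA_def
  set g : ℕ → Ω → ℝ := fun t => (A t).indicator (Y t) with hg_def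
  -- measurability
  have hY_sm : ∀ t, StronglyMeasurable[ℱ t] (Y t) := fun t =>
    Real.continuous_exp.comp_stronglyMeasurable
      (((hXadapted t).stronglyMeasurable.sub stronglyMeasurable_const).const_mul η)
  have hA_meas : ∀ t, MeasurableSet[ℱ t] (A t) := by
    intro t
    have hrw : A t = ⋂ (s : ℕ) (_ : s ≤ t), {ω | a < X s ω} := by
      ext ω; simp [hA_def]
    rw [hrw]
    refine MeasurableSet.iInter fun s => MeasurableSet.iInter fun hs => ?_
    exact measurableSet_lt measurable_const
      (((hXadapted s).stronglyMeasurable.mono (ℱ.mono hs)).measurable)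
  have hA_m : ∀ t, MeasurableSet (A t) := fun t => ℱ.le t _ (hA_meas t)
  have hg_sm : ∀ t, StronglyMeasurable[ℱ t] (g t) := fun t =>
    (hY_sm t).indicator (hA_meas t)
  have hg_asm : ∀ t, AEStronglyMeasurable (g t) μ := fun t =>
    ((hg_sm t).mono (ℱ.le t)).aestronglyMeasurable
  have hg_nonneg : ∀ t ω, 0 ≤ g t ω := fun t ω =>
    Set.indicator_nonneg (fun ω _ => (Real.exp_pos _).le) ω
  -- a.s. bound on X
  have hXbd : ∀ t : ℕ, ∀ᵐ ω ∂μ, |X t ω| ≤ |x₀| + t * ν := by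
    intro t
    induction t with
    | zero => filter_upwards with ω; simp [hX0 ω, le_abs_self]
    | succ t ih =>
        filter_upwards [ih, hinc t] with ω h1 h2
        have h3 : |X (t+1) ω| ≤ |X t ω| + |X (t+1) ω - X t ω| := by
          have := abs_add_le (X t ω) (X (t+1) ω - X t ω)
          simpa using this
        push_cast
        nlinarith
  -- bound on g
  have hg_bd : ∀ t : ℕ, ∀ᵐ ω ∂μ, |g t ω| ≤ Real.exp (η * (|x₀| + t * ν + |a|)) := by
    intro t
    filter_upwards [hXbd t] with ω h
    have hY1 : Y t ω ≤ Real.exp (η * (|x₀| + t * ν + |a|)) := by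
      rw [hY_def]
      apply Real.exp_le_exp.2
      have h1 : X t ω - a ≤ |x₀| + t * ν + |a| := by
        have := abs_le.1 h
        have := neg_abs_le a
        linarith
      nlinarith [hη0.le]
    rw [abs_of_nonneg (hg_nonneg t ω)]
    exact le_trans (Set.indicator_le_self' (fun ω' _ => (Real.exp_pos _).le) ω) hY1
  have hg_int : ∀ t, Integrable (g t) μ := fun t =>
    drift_integrable_of_ae_abs_le (hg_asm t) (hg_bd t)
  -- increments
  have hΔ_asm : ∀ t : ℕ, AEStronglyMeasurable (fun ω => X (t+1) ω - X t ω) μ := fun t =>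
    (((hXadapted (t+1)).stronglyMeasurable.mono (ℱ.le (t+1))).sub
      ((hXadapted t).stronglyMeasurable.mono (ℱ.le t))).aestronglyMeasurable
  have hΔ_int : ∀ t : ℕ, Integrable (fun ω => X (t+1) ω - X t ω) μ := fun t =>
    drift_integrable_of_ae_abs_le (hΔ_asm t) (hinc t)
  -- key one-step inequality
  have hstep : ∀ t : ℕ, ∫ ω, g (t+1) ω ∂μ ≤ ρ * ∫ ω, g t ω ∂μ := by
    intro t
    have hgΔ_int : Integrable (fun ω => g t ω * (X (t+1) ω - X t ω)) μ :=
      (hΔ_int t).bdd_mul (hg_asm t)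
        (by filter_upwards [hg_bd t] with ω h; simpa [Real.norm_eq_abs] using h)
    have hmul_int : Integrable (fun ω => g t ω * Real.exp (η * (X (t+1) ω - X t ω))) μ := by
      refine drift_integrable_of_ae_abs_le
        ((hg_asm t).mul (Real.continuous_exp.comp_aestronglyMeasurable
          ((hΔ_asm t).const_mul η)))
        (C := Real.exp (η * (|x₀| + t * ν + |a|)) * Real.exp (η * ν)) ?_
      filter_upwards [hg_bd t, hinc t] with ω h1 h2
      rw [abs_mul]
      have h3 : |Real.exp (η * (X (t+1) ω - X t ω))| ≤ Real.exp (η * ν) := by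
        rw [abs_of_pos (Real.exp_pos _)]
        apply Real.exp_le_exp.2
        have := abs_le.1 h2
        nlinarith [hη0.le]
      have h4 : (0:ℝ) ≤ |g t ω| := abs_nonneg _
      nlinarith [Real.exp_pos (η * ν), abs_nonneg (Real.exp (η * (X (t+1) ω - X t ω)))]
    -- step 1: shrink the indicator set and factor the exponential
    have hAsub : A (t+1) ⊆ A t := fun ω hω s hs => hω s (hs.trans (Nat.le_succ t))
    have h1 : ∫ ω, g (t+1) ω ∂μ
        ≤ ∫ ω, g t ω * Real.exp (η * (X (t+1) ω - X t ω)) ∂μ := by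
      refine integral_mono (hg_int (t+1)) hmul_int fun ω => ?_
      by_cases hω : ω ∈ A (t+1)
      · have hω' : ω ∈ A t := hAsub hω
        rw [hg_def]
        simp only [Set.indicator_of_mem hω, Set.indicator_of_mem hω']
        rw [hY_def]
        simp only
        rw [← Real.exp_add]
        apply le_of_eq
        congr 1
        ring
      · rw [hg_def]
        simp only [Set.indicator_of_notMem hω]
        exact mul_nonneg (hg_nonneg t ω) (Real.exp_pos _).le
    -- step 2: quadratic bound on the exponential
    have h2 : ∫ ω, g t ω * Real.exp (η * (X (t+1) ω - X t ω)) ∂μ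
        ≤ ∫ ω, ((1 + η^2 * c) * g t ω
            + η * (g t ω * (X (t+1) ω - X t ω))) ∂μ := by
      refine integral_mono_ae hmul_int
        (((hg_int t).const_mul _).add (hgΔ_int.const_mul _)) ?_
      filter_upwards [hinc t] with ω hω
      have hq := drift_exp_quad_bound hη0.le hηle1 hω
      rw [← hc_def] at hq
      calc g t ω * Real.exp (η * (X (t+1) ω - X t ω))
          ≤ g t ω * (1 + η * (X (t+1) ω - X t ω) + η^2 * c) :=
            mul_le_mul_of_nonneg_left hq (hg_nonneg t ω)
        _ = (1 + η^2 * c) * g t ω + η * (g t ω * (X (t+1) ω - X t ω)) := by ring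
    -- step 3: expand the integral
    have h3 : ∫ ω, ((1 + η^2 * c) * g t ω
            + η * (g t ω * (X (t+1) ω - X t ω))) ∂μ
        = (1 + η^2 * c) * ∫ ω, g t ω ∂μ
            + η * ∫ ω, g t ω * (X (t+1) ω - X t ω) ∂μ := by
      rw [integral_add ((hg_int t).const_mul _) (hgΔ_int.const_mul _),
        integral_const_mul, integral_const_mul]
    -- step 4: conditional expectation / drift
    have hpull : μ[(fun ω => g t ω * (X (t+1) ω - X t ω)) | ℱ t]
        =ᵐ[μ] fun ω => g t ω * (μ[fun ω' => X (t+1) ω' - X t ω' | ℱ t]) ω :=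
      condExp_mul_of_stronglyMeasurable_left (hg_sm t) hgΔ_int (hΔ_int t)
    have hce_int : Integrable (fun ω => g t ω *
        (μ[fun ω' => X (t+1) ω' - X t ω' | ℱ t]) ω) μ :=
      integrable_condExp.bdd_mul (hg_asm t)
        (by filter_upwards [hg_bd t] with ω h; simpa [Real.norm_eq_abs] using h)
    have h4 : ∫ ω, g t ω * (X (t+1) ω - X t ω) ∂μ ≤ -α * ∫ ω, g t ω ∂μ := by
      have e1 : ∫ ω, g t ω * (X (t+1) ω - X t ω) ∂μ
          = ∫ ω, g t ω * (μ[fun ω' => X (t+1) ω' - X t ω' | ℱ t]) ω ∂μ := by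
        rw [← integral_condExp (ℱ.le t)]
        exact integral_congr_ae hpull
      rw [e1, ← integral_const_mul]
      refine integral_mono_ae hce_int ((hg_int t).const_mul _) ?_
      filter_upwards [hdrift t] with ω hd
      by_cases hω : ω ∈ A t
      · have hXa : a < X t ω := hω t le_rfl
        have hce := hd (lt_of_le_of_lt (le_trans ha (le_refl a)) hXa |>.trans_le le_rfl)
        calc g t ω * (μ[fun ω' => X (t+1) ω' - X t ω' | ℱ t]) ω
            ≤ g t ω * (-α) := mul_le_mul_of_nonneg_left hce (hg_nonneg t ω)
          _ = -α * g t ω := by ring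
      · rw [hg_def]
        simp only [Set.indicator_of_notMem hω]
        simp
    -- combine
    have hIg : 0 ≤ ∫ ω, g t ω ∂μ := integral_nonneg (hg_nonneg t)
    have hcoef : 1 + η^2 * c - η * α ≤ ρ := by
      rw [hρ]
      nlinarith [hη0.le]
    calc ∫ ω, g (t+1) ω ∂μ
        ≤ (1 + η^2 * c) * ∫ ω, g t ω ∂μ
            + η * ∫ ω, g t ω * (X (t+1) ω - X t ω) ∂μ := by
          rw [← h3]; exact le_trans h1 h2
      _ ≤ (1 + η^2 * c) * ∫ ω, g t ω ∂μ + η * (-α * ∫ ω, g t ω ∂μ) := by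
          have := mul_le_mul_of_nonneg_left h4 hη0.le
          linarith
      _ = (1 + η^2 * c - η * α) * ∫ ω, g t ω ∂μ := by ring
      _ ≤ ρ * ∫ ω, g t ω ∂μ := mul_le_mul_of_nonneg_right hcoef hIg
  -- geometric decay
  have hp : ∀ t : ℕ, ∫ ω, g t ω ∂μ ≤ ρ ^ t * K := by
    intro t
    induction t with
    | zero =>
        have hle : ∀ ω, g 0 ω ≤ K := by
          intro ω
          have : Y 0 ω = K := by rw [hY_def, hK_def]; simp [hX0 ω]
          calc g 0 ω ≤ Y 0 ω :=
              Set.indicator_le_self' (fun ω' _ => (Real.exp_pos _).le) ω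
            _ = K := this
        calc ∫ ω, g 0 ω ∂μ ≤ ∫ _ω, K ∂μ :=
            integral_mono (hg_int 0) (integrable_const K) hle
          _ = K := by simp
          _ = ρ ^ 0 * K := by ring
    | succ t ih =>
        calc ∫ ω, g (t+1) ω ∂μ ≤ ρ * ∫ ω, g t ω ∂μ := hstep t
          _ ≤ ρ * (ρ ^ t * K) := mul_le_mul_of_nonneg_left ih hρ0.le
          _ = ρ ^ (t+1) * K := by ring
  -- measure bound
  have hμA : ∀ t : ℕ, μ (A t) ≤ ENNReal.ofReal (ρ ^ t * K) := by
    intro t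
    have step1 : μ (A t) = ∫⁻ ω, (A t).indicator (fun _ => (1:ℝ≥0∞)) ω ∂μ :=
      (lintegral_indicator_one (hA_m t)).symm
    have step2 : ∫⁻ ω, (A t).indicator (fun _ => (1:ℝ≥0∞)) ω ∂μ
        ≤ ∫⁻ ω, ENNReal.ofReal (g t ω) ∂μ := by
      refine lintegral_mono fun ω => ?_
      by_cases hω : ω ∈ A t
      · rw [Set.indicator_of_mem hω]
        have hXa : a < X t ω := hω t le_rfl
        have h1 : (1:ℝ) ≤ g t ω := by
          rw [hg_def]
          simp only [Set.indicator_of_mem hω]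
          rw [hY_def]
          simp only
          rw [show (1:ℝ) = Real.exp 0 by simp]
          apply Real.exp_le_exp.2
          nlinarith [hη0.le]
        calc (1:ℝ≥0∞) = ENNReal.ofReal 1 := by simp
          _ ≤ ENNReal.ofReal (g t ω) := ENNReal.ofReal_le_ofReal h1
      · rw [Set.indicator_of_notMem hω]
        exact zero_le
    have step3 : ∫⁻ ω, ENNReal.ofReal (g t ω) ∂μ
        = ENNReal.ofReal (∫ ω, g t ω ∂μ) :=
      (ofReal_integral_eq_lintegral_ofReal (hg_int t)
        (Filter.Eventually.of_forall (hg_nonneg t))).symm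
    calc μ (A t) = _ := step1
      _ ≤ _ := step2
      _ = _ := step3
      _ ≤ ENNReal.ofReal (ρ ^ t * K) := ENNReal.ofReal_le_ofReal (hp t)
  -- hitting time as a sum of indicators
  have hTeq : ∀ ω, T ω = ∑' n : ℕ, (A n).indicator (fun _ => (1:ℝ≥0∞)) ω := by
    intro ω
    by_cases hS : ∃ t : ℕ, X t ω ≤ a
    · have hk : X (Nat.find hS) ω ≤ a := Nat.find_spec hS
      have hTω : T ω = (Nat.find hS : ℝ≥0∞) := by
        rw [hT ω]
        apply le_antisymm
        · exact iInf₂_le (Nat.find hS) hk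
        · exact le_iInf₂ fun t ht => Nat.cast_le.2 (Nat.find_le ht)
      have hind : ∀ n : ℕ, (A n).indicator (fun _ => (1:ℝ≥0∞)) ω
          = if n < Nat.find hS then 1 else 0 := by
        intro n
        by_cases h : n < Nat.find hS
        · rw [if_pos h, Set.indicator_of_mem]
          intro s hs
          exact lt_of_not_ge (Nat.find_min hS (lt_of_le_of_lt hs h))
        · rw [if_neg h, Set.indicator_of_notMem]
          intro hmem
          exact absurd (hmem (Nat.find hS) (Nat.not_lt.1 h)) (not_lt.2 hk)
      rw [hTω]
      rw [tsum_eq_sum (s := Finset.range (Nat.find hS))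
        (fun n hn => by rw [hind n, if_neg (by simpa using hn)])]
      rw [Finset.sum_congr rfl (fun n hn => by
        rw [hind n, if_pos (Finset.mem_range.1 hn)])]
      simp
    · push_neg at hS
      have h1 : ∀ t : ℕ, ¬ X t ω ≤ a := fun t => not_le.2 (hS t)
      have hTω : T ω = ⊤ := by
        rw [hT ω]
        simp [h1]
      have hmem : ∀ n : ℕ, ω ∈ A n := fun n s _ => hS s
      rw [hTω]
      rw [tsum_congr (fun n => Set.indicator_of_mem (hmem n) _)]
      exact (ENNReal.tsum_const_eq_top_of_ne_zero one_ne_zero).symm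
  -- put everything together
  have hTint : ∫⁻ ω, T ω ∂μ = ∑' n : ℕ, μ (A n) := by
    calc ∫⁻ ω, T ω ∂μ
        = ∫⁻ ω, ∑' n : ℕ, (A n).indicator (fun _ => (1:ℝ≥0∞)) ω ∂μ :=
          lintegral_congr hTeq
      _ = ∑' n : ℕ, ∫⁻ ω, (A n).indicator (fun _ => (1:ℝ≥0∞)) ω ∂μ :=
          lintegral_tsum fun n => (measurable_one.indicator (hA_m n)).aemeasurable
      _ = ∑' n : ℕ, μ (A n) := tsum_congr fun n => lintegral_indicator_one (hA_m n)
  have hsumm : Summable (fun n : ℕ => ρ ^ n * K) :=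
    (summable_geometric_of_lt_one hρ0.le hρ1).mul_right K
  have htsum : ∑' n : ℕ, ρ ^ n * K = K / (1 - ρ) := by
    rw [tsum_mul_right, tsum_geometric_of_lt_one hρ0.le hρ1, div_eq_mul_inv, mul_comm]
  have hmain : ∫⁻ ω, T ω ∂μ ≤ ENNReal.ofReal (K / (1 - ρ)) := by
    calc ∫⁻ ω, T ω ∂μ = ∑' n : ℕ, μ (A n) := hTint
      _ ≤ ∑' n : ℕ, ENNReal.ofReal (ρ ^ n * K) := ENNReal.tsum_le_tsum hμA
      _ = ENNReal.ofReal (∑' n : ℕ, ρ ^ n * K) :=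
          (ENNReal.ofReal_tsum_of_nonneg (fun n => by positivity) hsumm).symm
      _ = ENNReal.ofReal (K / (1 - ρ)) := by rw [htsum]
  exact ⟨hmain, lt_of_le_of_lt hmain ENNReal.ofReal_lt_top⟩
end

section
/- Let Y be a real-valued random variable on a probability space with |Y| ≤ ν almost surely for some ν > 0 and E[Y] ≤ −α for some α > 0. Then for every η with 0 < η ≤ 1, E[e^{ηY}] ≤ 1 − ηα + η²(e^ν − ν − 1). -/
open MeasureTheory Real

lemma exp_tsum_real (t : ℝ) : Real.exp t = ∑' n : ℕ, t ^ n / n.factorial := by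
  rw [Real.exp_eq_exp_ℝ, NormedSpace.exp_eq_tsum_div]

lemma exp_tail (t : ℝ) :
    Real.exp t - 1 - t = ∑' n : ℕ, t ^ (n + 2) / (n + 2).factorial := by
  have hs := Real.summable_pow_div_factorial t
  have h := Summable.sum_add_tsum_nat_add 2 hs
  have hr : ∑ i ∈ Finset.range 2, t ^ i / i.factorial = 1 + t := by
    simp [Finset.sum_range_succ]
  rw [hr] at h
  rw [← exp_tsum_real] at h
  linarith

lemma key (x ν η : ℝ) (hx : |x| ≤ ν) (hη0 : 0 ≤ η) (hη1 : η ≤ 1) :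
    Real.exp (η * x) ≤ 1 + η * x + η ^ 2 * (Real.exp ν - ν - 1) := by
  have hxν : -ν ≤ x ∧ x ≤ ν := abs_le.mp hx
  have hν0 : 0 ≤ ν := le_trans (abs_nonneg x) hx
  have hterm : ∀ n : ℕ, (η * x) ^ (n + 2) / (n + 2).factorial ≤
      η ^ 2 * (ν ^ (n + 2) / (n + 2).factorial) := by
    intro n
    rw [← mul_div_assoc]
    have hnum : (η * x) ^ (n + 2) ≤ η ^ 2 * ν ^ (n + 2) := by
      calc (η * x) ^ (n + 2) ≤ |(η * x) ^ (n + 2)| := le_abs_self _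
        _ = η ^ (n + 2) * |x| ^ (n + 2) := by
            rw [abs_pow, abs_mul, mul_pow, abs_of_nonneg hη0]
        _ ≤ η ^ 2 * ν ^ (n + 2) := by
            apply mul_le_mul
            · exact pow_le_pow_of_le_one hη0 hη1 (by omega)
            · exact pow_le_pow_left₀ (abs_nonneg x) hx _
            · positivity
            · positivity
    gcongr
  have hs1 : Summable (fun n : ℕ => (η * x) ^ (n + 2) / (n + 2).factorial) :=
    ((summable_nat_add_iff 2).mpr (Real.summable_pow_div_factorial (η * x)))
  have hs2 : Summable (fun n : ℕ => η ^ 2 * (ν ^ (n + 2) / (n + 2).factorial)) :=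
    (((summable_nat_add_iff 2).mpr (Real.summable_pow_div_factorial ν)).mul_left _)
  have := Summable.tsum_le_tsum hterm hs1 hs2
  rw [tsum_mul_left] at this
  rw [← exp_tail, ← exp_tail] at this
  nlinarith [this]

/-- If `|Y| ≤ ν` a.s. and `E[Y] ≤ −α`, then for `0 < η ≤ 1`,
`E[e^{ηY}] ≤ 1 − ηα + η²(e^ν − ν − 1)`. -/
theorem stmt_5
    {Ω : Type*} {m : MeasurableSpace Ω} {μ : Measure Ω} [IsProbabilityMeasure μ]
    (Y : Ω → ℝ) (hY : Measurable Y)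
    (ν α η : ℝ) (hν : 0 < ν) (hα : 0 < α)
    (hbdd : ∀ᵐ ω ∂μ, |Y ω| ≤ ν)
    (hmean : ∫ ω, Y ω ∂μ ≤ -α)
    (hη0 : 0 < η) (hη1 : η ≤ 1) :
    ∫ ω, Real.exp (η * Y ω) ∂μ ≤ 1 - η * α + η ^ 2 * (Real.exp ν - ν - 1) := by
  have hYint : Integrable Y μ := by
    apply (integrable_const ν).mono' hY.aestronglyMeasurable
    filter_upwards [hbdd] with ω h using by simpa using h
  have hint : Integrable (fun ω => Real.exp (η * Y ω)) μ := by
    apply (integrable_const (Real.exp (η * ν))).mono'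
      (hY.const_mul η).exp.aestronglyMeasurable
    filter_upwards [hbdd] with ω h
    rw [Real.norm_eq_abs, abs_of_nonneg (Real.exp_pos _).le]
    exact Real.exp_le_exp.mpr (mul_le_mul_of_nonneg_left ((le_abs_self _).trans h) hη0.le)
  have hmono : ∫ ω, Real.exp (η * Y ω) ∂μ ≤
      ∫ ω, (1 + η * Y ω + η ^ 2 * (Real.exp ν - ν - 1)) ∂μ := by
    apply integral_mono_ae hint
    · exact ((integrable_const 1).add (hYint.const_mul η)).add (integrable_const _)
    · filter_upwards [hbdd] with ω h using key (Y ω) ν η h hη0.le hη1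
  have hcalc : ∫ ω, (1 + η * Y ω + η ^ 2 * (Real.exp ν - ν - 1)) ∂μ =
      1 + η * ∫ ω, Y ω ∂μ + η ^ 2 * (Real.exp ν - ν - 1) := by
    have h1 : Integrable (fun ω => 1 + η * Y ω) μ :=
      (integrable_const 1).add (hYint.const_mul η)
    rw [integral_add h1 (integrable_const _),
      integral_add (integrable_const 1) (hYint.const_mul η),
      integral_const, integral_const, integral_const_mul]
    simp
  rw [hcalc] at hmono
  nlinarith [hmono, sq_nonneg η]
end
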